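/- For all integers d ≥ 1 and real x, Σ_{k=0}^{d-1} C(d-1,k) x^k/(k+1)! = (1/(d! x)) Σ_{k=0}^{d} s(d,k) T_k(x), where s(d,k) are unsigned Stirling numbers of the first kind and T_k(x) = Σ_{i=0}^{k} S(k,i) x^i are the Touchard (Bell) polynomials with S(k,i) the Stirling numbers of the second kind. Equivalently, d!·x·Σ_{k=0}^{d-1} C(d-1,k) x^k/(k+1)! = Σ_{k=0}^{d} s(d,k) T_k(x) as polynomials in x. -/
import Mathlib


/-- Unsigned Stirling numbers of the first kind: s(n+1,k) = n·s(n,k) + s(n,k-1). -/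
def stirling1 : ℕ → ℕ → ℕ
  | 0, 0 => 1
  | 0, _ + 1 => 0
  | n + 1, 0 => n * stirling1 n 0
  | n + 1, k + 1 => n * stirling1 n (k + 1) + stirling1 n k

/-- Stirling numbers of the second kind: S(n+1,k) = k·S(n,k) + S(n,k-1). -/
def stirling2 : ℕ → ℕ → ℕ
  | 0, 0 => 1
  | 0, _ + 1 => 0
  | _ + 1, 0 => 0
  | n + 1, k + 1 => (k + 1) * stirling2 n (k + 1) + stirling2 n k

/-- The Touchard (Bell) polynomial T_k(x) = Σ_{i=0}^k S(k,i) x^i. -/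
def touchard (k : ℕ) (x : ℝ) : ℝ :=
  ∑ i ∈ Finset.range (k + 1), (stirling2 k i : ℝ) * x ^ i

/-- Lah numbers. -/
def lah : ℕ → ℕ → ℕ
  | 0, 0 => 1
  | 0, _ + 1 => 0
  | n + 1, 0 => n * lah n 0
  | n + 1, k + 1 => (n + k + 1) * lah n (k + 1) + lah n k

lemma lah_succ_zero (n : ℕ) : lah (n + 1) 0 = 0 := by
  induction n with
  | zero => rfl
  | succ m ih => show (m + 1) * lah (m + 1) 0 = 0; rw [ih, mul_zero]

lemma stirling1_eq_zero_of_lt : ∀ n k, n < k → stirling1 n k = 0 := by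
  intro n
  induction n with
  | zero => intro k hk; cases k with
    | zero => omega
    | succ j => rfl
  | succ m ih =>
    intro k hk
    cases k with
    | zero => omega
    | succ j =>
      show m * stirling1 m (j + 1) + stirling1 m j = 0
      rw [ih (j+1) (by omega), ih j (by omega), mul_zero]

lemma stirling2_eq_zero_of_lt : ∀ n k, n < k → stirling2 n k = 0 := by
  intro n
  induction n with
  | zero => intro k hk; cases k with
    | zero => omega
    | succ j => rfl
  | succ m ih =>
    intro k hk
    cases k with
    | zero => omega
    | succ j =>
      show (j + 1) * stirling2 m (j + 1) + stirling2 m j = 0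
      rw [ih (j+1) (by omega), ih j (by omega), mul_zero]

/-- Key: composition of Stirling numbers gives Lah numbers. -/
lemma sum_stirling_eq_lah : ∀ d i,
    (∑ k ∈ Finset.range (d + 1), stirling1 d k * stirling2 k i) = lah d i := by
  intro d
  induction d with
  | zero =>
    intro i
    cases i with
    | zero => simp [stirling1, stirling2, lah]
    | succ j => simp [stirling1, stirling2, lah]
  | succ m ih =>
    intro i
    rw [Finset.sum_range_succ' _ (m + 1)]
    have h1 : ∀ k, stirling1 (m + 1) (k + 1) = m * stirling1 m (k + 1) + stirling1 m k := by
      intro k; rfl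
    have h0 : stirling1 (m + 1) 0 = m * stirling1 m 0 := rfl
    have split : (∑ k ∈ Finset.range (m + 1), stirling1 (m + 1) (k + 1) * stirling2 (k + 1) i)
        + stirling1 (m + 1) 0 * stirling2 0 i
        = m * lah m i + ∑ k ∈ Finset.range (m + 1), stirling1 m k * stirling2 (k + 1) i := by
      have hsplit : (∑ k ∈ Finset.range (m + 1), stirling1 (m + 1) (k + 1) * stirling2 (k + 1) i)
          = (∑ k ∈ Finset.range (m + 1), m * (stirling1 m (k + 1) * stirling2 (k + 1) i))
            + ∑ k ∈ Finset.range (m + 1), stirling1 m k * stirling2 (k + 1) i := by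
        rw [← Finset.sum_add_distrib]
        apply Finset.sum_congr rfl
        intro k _
        rw [h1]; ring
      rw [hsplit, h0]
      have hm : (∑ k ∈ Finset.range (m + 1), m * (stirling1 m (k + 1) * stirling2 (k + 1) i))
          + m * stirling1 m 0 * stirling2 0 i = m * lah m i := by
        rw [← ih i, Finset.sum_range_succ' (fun k => stirling1 m k * stirling2 k i) m,
          Finset.sum_range_succ (fun k => m * (stirling1 m (k + 1) * stirling2 (k + 1) i)) m,
          stirling1_eq_zero_of_lt m (m + 1) (by omega)]
        simp only [zero_mul, mul_zero, add_zero]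
        rw [mul_add, Finset.mul_sum, mul_assoc]
      omega
    rw [split]
    cases i with
    | zero =>
      have hz : ∀ k, stirling2 (k + 1) 0 = 0 := fun k => rfl
      simp only [hz, mul_zero, Finset.sum_const_zero, add_zero]
      rfl
    | succ j =>
      have h2 : ∀ k, stirling2 (k + 1) (j + 1) = (j + 1) * stirling2 k (j + 1) + stirling2 k j :=
        fun k => rfl
      have hs : (∑ k ∈ Finset.range (m + 1), stirling1 m k * stirling2 (k + 1) (j + 1))
          = (j + 1) * lah m (j + 1) + lah m j := by
        rw [← ih (j + 1), ← ih j, Finset.mul_sum, ← Finset.sum_add_distrib]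
        apply Finset.sum_congr rfl
        intro k _
        rw [h2]; ring
      rw [hs]
      show _ = (m + j + 1) * lah m (j + 1) + lah m j
      ring

/-- Lah numbers in closed form. -/
lemma lah_mul_factorial : ∀ d k,
    lah (d + 1) (k + 1) * Nat.factorial (k + 1) = Nat.factorial (d + 1) * Nat.choose d k := by
  intro d
  induction d with
  | zero =>
    intro k
    cases k with
    | zero => rfl
    | succ j => simp [lah, Nat.choose]
  | succ m ih =>
    intro k
    show ((m + 1 + k + 1) * lah (m + 1) (k + 1) + lah (m + 1) k) * Nat.factorial (k + 1)
        = Nat.factorial (m + 2) * Nat.choose (m + 1) k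
    cases k with
    | zero =>
      rw [lah_succ_zero, add_zero]
      have h : lah (m + 1) 1 = Nat.factorial (m + 1) := by simpa using ih 0
      rw [h, Nat.choose_zero_right, mul_one]
      show (m + 2) * Nat.factorial (m + 1) * 1 = Nat.factorial (m + 2)
      simp [Nat.factorial_succ]
    | succ j =>
      have ih1 := ih (j + 1)
      have ih2 := ih j
      set c1 := Nat.choose m (j + 1) with hc1
      set c0 := Nat.choose m j with hc0
      have key : (j + 1) * c1 = (m - j) * c0 := by
        rw [mul_comm, hc1, Nat.choose_succ_right_eq, mul_comm, hc0]
      have hfac : Nat.factorial (j + 1 + 1) = (j + 2) * Nat.factorial (j + 1) := rfl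
      have hch : Nat.choose (m + 1) (j + 1) = c0 + c1 := Nat.choose_succ_succ m j
      have hfm : Nat.factorial (m + 2) = (m + 2) * Nat.factorial (m + 1) := rfl
      have hcoef : (m + 1 + (j + 1) + 1) * c1 + (j + 2) * c0 = (m + 2) * (c0 + c1) := by
        rcases le_or_gt j m with hj | hj
        · zify [hj] at key ⊢
          linear_combination key
        · have e1 : c1 = 0 := Nat.choose_eq_zero_of_lt (by omega)
          have e0 : c0 = 0 := Nat.choose_eq_zero_of_lt (by omega)
          simp [e0, e1]
      calc ((m + 1 + (j + 1) + 1) * lah (m + 1) (j + 1 + 1) + lah (m + 1) (j + 1))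
              * Nat.factorial (j + 1 + 1)
          = (m + 1 + (j + 1) + 1) * (lah (m + 1) (j + 1 + 1) * Nat.factorial (j + 1 + 1))
            + (j + 2) * (lah (m + 1) (j + 1) * Nat.factorial (j + 1)) := by
            rw [hfac]; ring
        _ = (m + 1 + (j + 1) + 1) * (Nat.factorial (m + 1) * c1)
            + (j + 2) * (Nat.factorial (m + 1) * c0) := by rw [ih1, ih2]
        _ = Nat.factorial (m + 1) * ((m + 1 + (j + 1) + 1) * c1 + (j + 2) * c0) := by ring
        _ = Nat.factorial (m + 1) * ((m + 2) * (c0 + c1)) := by rw [hcoef]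
        _ = Nat.factorial (m + 2) * Nat.choose (m + 1) (j + 1) := by rw [hch, hfm]; ring

theorem kummer_touchard_identity (d : ℕ) (hd : 1 ≤ d) (x : ℝ) :
    (Nat.factorial d : ℝ) * x *
        ∑ k ∈ Finset.range d,
          (Nat.choose (d - 1) k : ℝ) * x ^ k / (Nat.factorial (k + 1) : ℝ) =
      ∑ k ∈ Finset.range (d + 1), (stirling1 d k : ℝ) * touchard k x := by
  obtain ⟨e, rfl⟩ : ∃ e, d = e + 1 := ⟨d - 1, by omega⟩
  -- RHS computation
  have rhs_eq : (∑ k ∈ Finset.range (e + 1 + 1), (stirling1 (e + 1) k : ℝ) * touchard k x)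
      = ∑ i ∈ Finset.range (e + 1 + 1), (lah (e + 1) i : ℝ) * x ^ i := by
    have step1 : ∀ k ∈ Finset.range (e + 1 + 1),
        (stirling1 (e + 1) k : ℝ) * touchard k x
        = ∑ i ∈ Finset.range (e + 1 + 1),
            (stirling1 (e + 1) k : ℝ) * ((stirling2 k i : ℝ) * x ^ i) := by
      intro k hk
      simp only [Finset.mem_range] at hk
      unfold touchard
      rw [Finset.mul_sum]
      apply Finset.sum_subset
      · intro i hi
        simp only [Finset.mem_range] at hi ⊢
        omega
      · intro i _ hi
        simp only [Finset.mem_range, not_lt] at hi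
        rw [stirling2_eq_zero_of_lt k i (by omega)]
        simp
    rw [Finset.sum_congr rfl step1, Finset.sum_comm]
    apply Finset.sum_congr rfl
    intro i _
    have cast_eq : (∑ k ∈ Finset.range (e + 1 + 1),
          (stirling1 (e + 1) k : ℝ) * (stirling2 k i : ℝ)) = (lah (e + 1) i : ℝ) := by
      exact_mod_cast congrArg (fun n : ℕ => (n : ℝ)) (sum_stirling_eq_lah (e + 1) i)
    calc (∑ k ∈ Finset.range (e + 1 + 1),
            (stirling1 (e + 1) k : ℝ) * ((stirling2 k i : ℝ) * x ^ i))
        = (∑ k ∈ Finset.range (e + 1 + 1),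
            (stirling1 (e + 1) k : ℝ) * (stirling2 k i : ℝ)) * x ^ i := by
          rw [Finset.sum_mul]; apply Finset.sum_congr rfl; intro k _; ring
      _ = (lah (e + 1) i : ℝ) * x ^ i := by rw [cast_eq]
  rw [rhs_eq]
  rw [Finset.sum_range_succ' (fun i => (lah (e + 1) i : ℝ) * x ^ i) (e + 1)]
  rw [lah_succ_zero]
  simp only [Nat.cast_zero, zero_mul, pow_zero, mul_one, add_zero]
  rw [Finset.mul_sum]
  apply Finset.sum_congr rfl
  intro k _
  have hb := lah_mul_factorial e k
  have hbr : (lah (e + 1) (k + 1) : ℝ) * (Nat.factorial (k + 1) : ℝ)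
      = (Nat.factorial (e + 1) : ℝ) * (Nat.choose e k : ℝ) := by exact_mod_cast hb
  have hfne : (Nat.factorial (k + 1) : ℝ) ≠ 0 := Nat.cast_ne_zero.mpr (Nat.factorial_ne_zero _)
  simp only [Nat.add_sub_cancel]
  field_simp
  linear_combination (-(x ^ (k + 1))) * hbr
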